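/- For a fixed λ > 0, the map A ↦ Tr((A + λI)⁻¹ A) is concave on the cone of symmetric positive semi-definite d×d matrices. -/

import Mathlib

open Matrix

private lemma psd_trace_nonneg {d : ℕ} {M : Matrix (Fin d) (Fin d) ℝ}
    (hM : M.PosSemidef) : 0 ≤ M.trace := by
  unfold Matrix.trace
  refine Finset.sum_nonneg fun i _ => ?_
  have := hM.dotProduct_mulVec_nonneg (Pi.single i 1)
  simpa [Matrix.mulVec_single, dotProduct, Pi.single_apply, Matrix.diag] using this

private lemma psd_smul {d : ℕ} {M : Matrix (Fin d) (Fin d) ℝ}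
    (hM : M.PosSemidef) {c : ℝ} (hc : 0 ≤ c) : (c • M).PosSemidef := by
  refine .of_dotProduct_mulVec_nonneg ?_ fun x => ?_
  · have hMs : Mᵀ = M := by
      simpa [Matrix.conjTranspose_eq_transpose_of_trivial] using hM.1.eq
    simp [Matrix.IsHermitian, Matrix.conjTranspose_smul, hMs]
  · rw [Matrix.smul_mulVec, dotProduct_smul, smul_eq_mul]
    exact mul_nonneg hc (hM.dotProduct_mulVec_nonneg x)

private lemma key_ineq {d : ℕ} {X : Matrix (Fin d) (Fin d) ℝ} (hX : X.PosDef)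
    (V : Matrix (Fin d) (Fin d) ℝ) :
    2 * V.trace - (Vᵀ * X * V).trace ≤ X⁻¹.trace := by
  have hXinv : X⁻¹ᵀ = X⁻¹ := by
    have := hX.isHermitian.inv
    exact (by simpa [Matrix.conjTranspose_eq_transpose_of_trivial] using this : X⁻¹.IsSymm).eq
  have hXs : Xᵀ = X := by
    have := hX.isHermitian
    exact (by simpa [Matrix.conjTranspose_eq_transpose_of_trivial] using this : X.IsSymm).eq
  have hdet : IsUnit X.det := hX.det_pos.ne'.isUnit
  have hXiX : X⁻¹ * X = 1 := Matrix.nonsing_inv_mul X hdet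
  have hXXi : X * X⁻¹ = 1 := Matrix.mul_nonsing_inv X hdet
  have hpsd : ((V - X⁻¹)ᴴ * X * (V - X⁻¹)).PosSemidef :=
    hX.posSemidef.conjTranspose_mul_mul_same (V - X⁻¹)
  have h0 : 0 ≤ ((V - X⁻¹)ᵀ * X * (V - X⁻¹)).trace := by
    have := psd_trace_nonneg hpsd
    rwa [Matrix.conjTranspose_eq_transpose_of_trivial] at this
  have hexp : (V - X⁻¹)ᵀ * X * (V - X⁻¹)
      = Vᵀ * X * V - Vᵀ - V + X⁻¹ := by
    rw [Matrix.transpose_sub, hXinv]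
    rw [Matrix.sub_mul, Matrix.sub_mul, Matrix.mul_sub, Matrix.mul_sub]
    rw [hXiX, Matrix.mul_assoc V ᵀ X X⁻¹, hXXi, Matrix.mul_one, Matrix.one_mul]
    simp only [Matrix.one_mul]
    abel
  rw [hexp] at h0
  rw [Matrix.trace_add, Matrix.trace_sub, Matrix.trace_sub, Matrix.trace_transpose] at h0
  linarith

theorem trace_reg_inv_mul_concave {d : ℕ} (l : ℝ) (hl : 0 < l)
    (A B : Matrix (Fin d) (Fin d) ℝ) (hA : A.PosSemidef) (hB : B.PosSemidef)
    (t : ℝ) (ht0 : 0 ≤ t) (ht1 : t ≤ 1) :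
    (1 - t) * ((A + l • (1 : Matrix (Fin d) (Fin d) ℝ))⁻¹ * A).trace
        + t * ((B + l • (1 : Matrix (Fin d) (Fin d) ℝ))⁻¹ * B).trace
      ≤ ((((1 - t) • A + t • B) + l • (1 : Matrix (Fin d) (Fin d) ℝ))⁻¹
          * ((1 - t) • A + t • B)).trace := by
  have hI : (l • (1 : Matrix (Fin d) (Fin d) ℝ)).PosDef := by
    rw [Matrix.smul_one_eq_diagonal]
    exact Matrix.PosDef.diagonal fun _ => hl
  set X := A + l • (1 : Matrix (Fin d) (Fin d) ℝ) with hXdef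
  set Y := B + l • (1 : Matrix (Fin d) (Fin d) ℝ) with hYdef
  set Z := ((1 - t) • A + t • B) + l • (1 : Matrix (Fin d) (Fin d) ℝ) with hZdef
  have hX : X.PosDef := Matrix.PosDef.posSemidef_add hA hI
  have hY : Y.PosDef := Matrix.PosDef.posSemidef_add hB hI
  have hZ : Z.PosDef :=
    Matrix.PosDef.posSemidef_add
      ((psd_smul hA (by linarith : (0:ℝ) ≤ 1 - t)).add (psd_smul hB ht0)) hI
  have hZcomb : Z = (1 - t) • X + t • Y := by
    rw [hXdef, hYdef, hZdef]
    module
  -- reduce traces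
  have hXdet : IsUnit X.det := hX.det_pos.ne'.isUnit
  have hYdet : IsUnit Y.det := hY.det_pos.ne'.isUnit
  have hZdet : IsUnit Z.det := hZ.det_pos.ne'.isUnit
  have hXtr : (X⁻¹ * A).trace = (d : ℝ) - l * X⁻¹.trace := by
    have : A = X - l • (1 : Matrix (Fin d) (Fin d) ℝ) := by rw [hXdef]; abel
    rw [this, Matrix.mul_sub, Matrix.nonsing_inv_mul X hXdet, Matrix.trace_sub,
      Matrix.mul_smul, Matrix.mul_one, Matrix.trace_smul, Matrix.trace_one]
    simp [smul_eq_mul]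
  have hYtr : (Y⁻¹ * B).trace = (d : ℝ) - l * Y⁻¹.trace := by
    have : B = Y - l • (1 : Matrix (Fin d) (Fin d) ℝ) := by rw [hYdef]; abel
    rw [this, Matrix.mul_sub, Matrix.nonsing_inv_mul Y hYdet, Matrix.trace_sub,
      Matrix.mul_smul, Matrix.mul_one, Matrix.trace_smul, Matrix.trace_one]
    simp [smul_eq_mul]
  have hZtr : (Z⁻¹ * ((1 - t) • A + t • B)).trace = (d : ℝ) - l * Z⁻¹.trace := by
    have : (1 - t) • A + t • B = Z - l • (1 : Matrix (Fin d) (Fin d) ℝ) := by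
      rw [hZdef]; abel
    rw [this, Matrix.mul_sub, Matrix.nonsing_inv_mul Z hZdet, Matrix.trace_sub,
      Matrix.mul_smul, Matrix.mul_one, Matrix.trace_smul, Matrix.trace_one]
    simp [smul_eq_mul]
  rw [hXtr, hYtr, hZtr]
  -- convexity of trace of inverse
  have hconv : Z⁻¹.trace ≤ (1 - t) * X⁻¹.trace + t * Y⁻¹.trace := by
    set V := Z⁻¹ with hVdef
    have hVs : Vᵀ = V := by
      have := hZ.isHermitian.inv
      exact (by simpa [hVdef, Matrix.conjTranspose_eq_transpose_of_trivial] using this : V.IsSymm).eq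
    have hZZi : Z⁻¹ * Z = 1 := Matrix.nonsing_inv_mul Z hZdet
    have hVZV : Vᵀ * Z * V = Z⁻¹ := by
      rw [hVs, hVdef, hZZi, Matrix.one_mul]
    have hsplit : (Vᵀ * Z * V).trace
        = (1 - t) * (Vᵀ * X * V).trace + t * (Vᵀ * Y * V).trace := by
      rw [hZcomb, Matrix.mul_add, Matrix.add_mul, Matrix.trace_add,
        Matrix.mul_smul, Matrix.smul_mul, Matrix.mul_smul, Matrix.smul_mul,
        Matrix.trace_smul, Matrix.trace_smul]
      simp [smul_eq_mul]
    have hkX : 2 * V.trace - (Vᵀ * X * V).trace ≤ X⁻¹.trace := key_ineq hX V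
    have hkY : 2 * V.trace - (Vᵀ * Y * V).trace ≤ Y⁻¹.trace := key_ineq hY V
    have hVtr : V.trace = Z⁻¹.trace := by rw [hVdef]
    have : Z⁻¹.trace = 2 * V.trace - (Vᵀ * Z * V).trace := by
      rw [hVZV, ← hVtr]; ring
    rw [this, hsplit]
    have h1 : (1 - t) * (2 * V.trace - (Vᵀ * X * V).trace) ≤ (1 - t) * X⁻¹.trace :=
      mul_le_mul_of_nonneg_left hkX (by linarith)
    have h2 : t * (2 * V.trace - (Vᵀ * Y * V).trace) ≤ t * Y⁻¹.trace :=
      mul_le_mul_of_nonneg_left hkY ht0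
    nlinarith [h1, h2]
  nlinarith [hconv, hl.le]
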